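/- arXiv:1511.07292 — 2 statements merged into one kernel-verified Lean document; each statement's English description precedes it below -/
import Mathlib

section
/- Let $\alpha \in K^M_*(F)$ be a homogeneous element of positive degree that can be written as a sum $\alpha = \alpha_1 + \cdots + \alpha_k$ of $k$ pure symbols (products of degree-one elements). Then $\alpha^{k+1} = \{-1\}^n \gamma$ for some $\gamma \in K^M_*(F)$, where $n$ is the degree of $\alpha$. -/
open TensorAlgebra in
/-- The Steinberg relations on the tensor algebra of the units `Fˣ` (written additively):
`{a}·{1-a} = 0` for `a ≠ 0, 1`. -/
inductive SteinbergRel (F : Type*) [Field F] :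
    TensorAlgebra ℤ (Additive Fˣ) → TensorAlgebra ℤ (Additive Fˣ) → Prop
  | steinberg (a : Fˣ) (h : (a : F) ≠ 1) :
      SteinbergRel F
        ((ι ℤ (Additive.ofMul a)) *
          (ι ℤ (Additive.ofMul (Units.mk0 ((1 : F) - a) (sub_ne_zero.mpr (Ne.symm h))))))
        0

/-- The Milnor K-ring `K^M_*(F)` of a field `F`: the tensor algebra on `Fˣ`
modulo the Steinberg relations. -/
abbrev MilnorK (F : Type*) [Field F] := RingQuot (SteinbergRel F)

/-- The degree-one symbol `{a} ∈ K^M_1(F)`; it satisfies `{ab} = {a} + {b}`. -/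
noncomputable def MilnorSymbol (F : Type*) [Field F] (a : Fˣ) : MilnorK F :=
  RingQuot.mkRingHom (SteinbergRel F) (TensorAlgebra.ι ℤ (Additive.ofMul a))

/-- A pure symbol `{a₁}⋯{aₙ}`, i.e. a product of degree-one symbols. -/
noncomputable def pureSymbol (F : Type*) [Field F] (l : List Fˣ) : MilnorK F :=
  (l.map (MilnorSymbol F)).prod

/-- The homogeneous degree-`n` part of the Milnor K-ring: sums of pure symbols of degree `n`. -/
def milnorHomog (F : Type*) [Field F] (n : ℕ) : AddSubgroup (MilnorK F) :=
  AddSubgroup.closure { x | ∃ l : List Fˣ, l.length = n ∧ x = pureSymbol F l }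

section Aux
variable {F : Type*} [Field F]

lemma MS_mul (a b : Fˣ) : MilnorSymbol F (a * b) = MilnorSymbol F a + MilnorSymbol F b := by
  simp only [MilnorSymbol, ofMul_mul, map_add]

lemma MS_one : MilnorSymbol F 1 = 0 := by
  simp only [MilnorSymbol, ofMul_one, map_zero]

lemma MS_inv (a : Fˣ) : MilnorSymbol F a⁻¹ = - MilnorSymbol F a := by
  have h := MS_mul a a⁻¹
  rw [mul_inv_cancel, MS_one] at h
  exact (neg_eq_of_add_eq_zero_right h.symm).symm

lemma MS_steinberg (a : Fˣ) (h : (a : F) ≠ 1) :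
    MilnorSymbol F a *
      MilnorSymbol F (Units.mk0 ((1 : F) - a) (sub_ne_zero.mpr (Ne.symm h))) = 0 := by
  have h2 := RingQuot.mkRingHom_rel (SteinbergRel.steinberg (F := F) a h)
  rw [map_mul] at h2
  simpa [MilnorSymbol] using h2

end Aux
section Aux2
variable {F : Type*} [Field F]


section Arsenal
variable {F : Type*} [Field F]

lemma mq_neg_mul (x y : MilnorK F) : -x * y = -(x * y) := neg_mul x y
lemma mq_mul_neg (x y : MilnorK F) : x * -y = -(x * y) := mul_neg x y
lemma mq_neg_neg (x : MilnorK F) : - -x = x := neg_neg x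
lemma mq_neg_zero : -(0 : MilnorK F) = 0 := neg_zero
lemma mq_mul_zero (x : MilnorK F) : x * 0 = 0 := mul_zero x
lemma mq_zero_mul (x : MilnorK F) : 0 * x = 0 := zero_mul x
lemma mq_one_mul (x : MilnorK F) : 1 * x = x := one_mul x
lemma mq_mul_one (x : MilnorK F) : x * 1 = x := mul_one x
lemma mq_pow_succ (x : MilnorK F) (n : ℕ) : x ^ (n + 1) = x ^ n * x := pow_succ x n
lemma mq_pow_zero (x : MilnorK F) : x ^ 0 = 1 := pow_zero x
lemma mq_mul_assoc (x y z : MilnorK F) : x * y * z = x * (y * z) := mul_assoc x y z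
lemma mq_mul_add (x y z : MilnorK F) : x * (y + z) = x * y + x * z := mul_add x y z
lemma mq_add_mul (x y z : MilnorK F) : (x + y) * z = x * z + y * z := add_mul x y z

end Arsenal

lemma MS_steinberg' (a u : Fˣ) (h : (a : F) ≠ 1) (hu : (u : F) = 1 - a) :
    MilnorSymbol F a * MilnorSymbol F u = 0 := by
  have : u = Units.mk0 ((1 : F) - a) (sub_ne_zero.mpr (Ne.symm h)) := Units.ext (by simp [hu])
  rw [this]; exact MS_steinberg a h

lemma MS_mul_neg_self (a : Fˣ) : MilnorSymbol F a * MilnorSymbol F (-a) = 0 := by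
  by_cases ha : (a : F) = 1
  · have : a = 1 := Units.ext (by simpa using ha)
    subst this
    rw [MS_one, zero_mul]
  · have ha' : ((a⁻¹ : Fˣ) : F) ≠ 1 := by
      simpa [Units.val_inv_eq_inv_val, inv_eq_one] using ha
    set u : Fˣ := Units.mk0 ((1 : F) - a) (sub_ne_zero.mpr (Ne.symm ha)) with hu
    set v : Fˣ := Units.mk0 ((1 : F) - (a⁻¹ : Fˣ)) (sub_ne_zero.mpr (Ne.symm ha')) with hv
    have hna : -a = u * v⁻¹ := by
      apply Units.ext
      have h0 : (a : F) ≠ 0 := a.ne_zero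
      have h1 : (1 : F) - (a : F)⁻¹ ≠ 0 := by simpa using (sub_ne_zero.mpr (Ne.symm ha'))
      have h2 : (a : F) - 1 ≠ 0 := sub_ne_zero.mpr ha
      push_cast [hu, hv, Units.val_mk0]
      field_simp
      ring
    have e1 : MilnorSymbol F a * MilnorSymbol F u = 0 :=
      MS_steinberg' a u ha (by rw [hu]; simp)
    have e2 : MilnorSymbol F a⁻¹ * MilnorSymbol F v = 0 :=
      MS_steinberg' a⁻¹ v ha' (by rw [hv]; simp)
    have e3 : MilnorSymbol F a * MilnorSymbol F v = 0 := by
      have h4 : MilnorSymbol F a * MilnorSymbol F v = -(MilnorSymbol F a⁻¹ * MilnorSymbol F v) := by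
        rw [MS_inv, mq_neg_mul, mq_neg_neg]
      rw [h4, e2, mq_neg_zero]
    rw [hna, MS_mul, MS_inv, mul_add, mq_mul_neg, e1, e3, mq_neg_zero, add_zero]

lemma MS_anticomm (a b : Fˣ) :
    MilnorSymbol F a * MilnorSymbol F b = -(MilnorSymbol F b * MilnorSymbol F a) := by
  have h := MS_mul_neg_self (a * b)
  have h1 : -(a * b) = (-a) * b := (neg_mul a b).symm
  have h2 : -(a * b) = a * (-b) := (mul_neg a b).symm
  have e1 : MilnorSymbol F a * MilnorSymbol F (-(a*b)) =
      MilnorSymbol F a * MilnorSymbol F b := by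
    rw [h1, MS_mul, mul_add, MS_mul_neg_self, zero_add]
  have e2 : MilnorSymbol F b * MilnorSymbol F (-(a*b)) =
      MilnorSymbol F b * MilnorSymbol F a := by
    rw [h2, MS_mul, mul_add, MS_mul_neg_self, add_zero]
  rw [MS_mul, add_mul, e1, e2] at h
  exact eq_neg_of_add_eq_zero_left h

lemma MS_sq (a : Fˣ) :
    MilnorSymbol F a * MilnorSymbol F a = MilnorSymbol F (-1) * MilnorSymbol F a := by
  have h := MS_mul_neg_self a
  have h1 : -a = (-1) * a := by rw [neg_one_mul]
  rw [h1, MS_mul, mul_add] at h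
  have := MS_anticomm a (-1)
  rw [this] at h
  rw [neg_add_eq_sub] at h
  exact sub_eq_zero.mp h

end Aux2

section Helpers
variable {R : Type*} [Ring R]

lemma hlp_anticomm_step (sa sb pt : R) (m : ℕ)
    (hab : sb * sa = -(sa * sb))
    (ih : pt * sa = (-1:R)^m * (sa * pt)) :
    (sb * pt) * sa = (-1:R)^(m+1) * (sa * (sb * pt)) := by
  rcases Nat.even_or_odd m with he | ho
  · rw [he.neg_one_pow, one_mul] at ih
    rw [(he.add_one).neg_one_pow, neg_one_mul, mul_assoc, ih, ← mul_assoc, hab]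
    noncomm_ring
  · rw [ho.neg_one_pow, neg_one_mul] at ih
    rw [(ho.add_one).neg_one_pow, one_mul, mul_assoc, ih, mul_neg, ← mul_assoc, hab]
    noncomm_ring

lemma hlp_comm_step (sb pt pm : R) (lt lm : ℕ)
    (hcm : pm * sb = (-1:R)^lm * (sb * pm))
    (ih : pt * pm = (-1:R)^(lt * lm) * (pm * pt)) :
    (sb * pt) * pm = (-1:R)^((lt+1) * lm) * (pm * (sb * pt)) := by
  rcases Nat.even_or_odd lm with he | ho
  · rw [he.neg_one_pow, one_mul] at hcm
    rw [(he.mul_left lt).neg_one_pow, one_mul] at ih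
    rw [(he.mul_left (lt+1)).neg_one_pow, one_mul]
    rw [mul_assoc, ih, ← mul_assoc, ← hcm, mul_assoc]
  · rcases Nat.even_or_odd lt with het | hot
    · rw [ho.neg_one_pow, neg_one_mul] at hcm
      rw [(het.mul_right lm).neg_one_pow, one_mul] at ih
      rw [((het.add_one).mul ho).neg_one_pow, neg_one_mul]
      have hcm' : sb * pm = -(pm * sb) := by rw [hcm, neg_neg]
      rw [mul_assoc, ih, ← mul_assoc, hcm', neg_mul, mul_assoc]
    · rw [ho.neg_one_pow, neg_one_mul] at hcm
      rw [(hot.mul ho).neg_one_pow, neg_one_mul] at ih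
      rw [((hot.add_one).mul_right lm).neg_one_pow, one_mul]
      have hcm' : sb * pm = -(pm * sb) := by rw [hcm, neg_neg]
      rw [mul_assoc, ih, mul_neg, ← mul_assoc, hcm', neg_mul, neg_neg, mul_assoc]

lemma hlp_sq_step (sa pt s γ : R) (m : ℕ)
    (h1 : pt * sa = (-1:R)^m * (sa * pt))
    (h2 : s^m * sa = (-1:R)^m * (sa * s^m))
    (h3 : sa * sa = s * sa)
    (hγ : pt * pt = s^m * γ) :
    (sa * pt) * (sa * pt) = s^(m+1) * (sa * γ) := by
  rcases Nat.even_or_odd m with he | ho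
  · rw [he.neg_one_pow, one_mul] at h1 h2
    calc (sa*pt)*(sa*pt) = sa*((pt*sa)*pt) := by noncomm_ring
    _ = sa*((sa*pt)*pt) := by rw [h1]
    _ = (sa*sa)*(pt*pt) := by noncomm_ring
    _ = (s*sa)*(s^m*γ) := by rw [h3, hγ]
    _ = s*((sa*s^m)*γ) := by noncomm_ring
    _ = s*((s^m*sa)*γ) := by rw [← h2]
    _ = (s*s^m)*(sa*γ) := by noncomm_ring
    _ = s^(m+1)*(sa*γ) := by rw [← pow_succ']
  · rw [ho.neg_one_pow, neg_one_mul] at h1 h2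
    have h2' : sa * s^m = -(s^m * sa) := by rw [h2, neg_neg]
    calc (sa*pt)*(sa*pt) = sa*((pt*sa)*pt) := by noncomm_ring
    _ = sa*((-(sa*pt))*pt) := by rw [h1]
    _ = -((sa*sa)*(pt*pt)) := by noncomm_ring
    _ = -((s*sa)*(s^m*γ)) := by rw [h3, hγ]
    _ = -(s*((sa*s^m)*γ)) := by noncomm_ring
    _ = -(s*((-(s^m*sa))*γ)) := by rw [h2']
    _ = (s*s^m)*(sa*γ) := by noncomm_ring
    _ = s^(m+1)*(sa*γ) := by rw [← pow_succ']

lemma hlp_symbol_T (sa s γ : R) (n : ℕ)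
    (h2 : s^n * sa = (-1:R)^n * (sa * s^n)) :
    ∃ δ, sa * (s^n * γ) = s^n * δ := by
  rcases Nat.even_or_odd n with he | ho
  · rw [he.neg_one_pow, one_mul] at h2
    exact ⟨sa * γ, by rw [← mul_assoc, ← h2, mul_assoc]⟩
  · rw [ho.neg_one_pow, neg_one_mul] at h2
    have h2' : sa * s^n = -(s^n * sa) := by rw [h2, neg_neg]
    exact ⟨-(sa * γ), by rw [← mul_assoc, h2']; noncomm_ring⟩

lemma hlp_intcast (r : ℤ) (w γ : R) : (r : R) * (w * γ) = w * ((r:R) * γ) := by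
  rw [← mul_assoc, (Int.cast_commute r w).eq, mul_assoc]

lemma hlp_sum_anticomm (a : R) (t : List R) (h : ∀ y ∈ t, a * y = -(y * a)) :
    a * t.sum = -(t.sum * a) := by
  induction t with
  | nil => simp
  | cons b u ih =>
    rw [List.sum_cons, mul_add, add_mul, h b (by simp),
      ih (fun y hy => h y (by simp [hy]))]
    abel

lemma hlp_anticomm_sum_sq (xs : List R)
    (hsq : ∀ x ∈ xs, x * x = 0)
    (hac : ∀ x ∈ xs, ∀ y ∈ xs, x * y = -(y * x)) :
    xs.sum * xs.sum = 0 := by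
  induction xs with
  | nil => simp
  | cons a t ih =>
    rw [List.sum_cons, add_mul, mul_add, mul_add]
    have h1 : a * a = 0 := hsq a (by simp)
    have h2 : t.sum * t.sum = 0 :=
      ih (fun x hx => hsq x (by simp [hx])) (fun x hx y hy => hac x (by simp [hx]) y (by simp [hy]))
    have h3 : a * t.sum = -(t.sum * a) :=
      hlp_sum_anticomm a t (fun y hy => hac a (by simp) y (by simp [hy]))
    rw [h1, h2, h3]
    abel

lemma hlp_comm_sum_pow (xs : List R)
    (hsq : ∀ x ∈ xs, x * x = 0)
    (hc : ∀ x ∈ xs, ∀ y ∈ xs, Commute x y) :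
    xs.sum ^ (xs.length + 1) = 0 := by
  induction xs with
  | nil => simp
  | cons a t ih =>
    have hy : t.sum ^ (t.length + 1) = 0 :=
      ih (fun x hx => hsq x (by simp [hx])) (fun x hx y hyy => hc x (by simp [hx]) y (by simp [hyy]))
    have hca : Commute a t.sum :=
      Commute.list_sum_right a t (fun b hb => hc a (by simp) b (by simp [hb]))
    rw [List.sum_cons, List.length_cons, hca.add_pow]
    apply Finset.sum_eq_zero
    intro m _
    match m with
    | 0 =>
      have h0 : t.sum ^ (t.length + 1 + 1 - 0) = 0 := by
        rw [Nat.sub_zero, pow_succ, hy, zero_mul]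
      rw [h0]; simp
    | 1 =>
      rw [show t.length + 1 + 1 - 1 = t.length + 1 by omega, hy]
      simp
    | (m+2) =>
      have h0 : a ^ (m + 2) = 0 := by
        rw [pow_succ, pow_succ, mul_assoc, hsq a (by simp), mul_zero]
      rw [h0, zero_mul, zero_mul]

lemma hlp_pow_of_sq_zero (x : R) (k : ℕ) (hk : 1 ≤ k) (h : x * x = 0) :
    x ^ (k + 1) = 0 := by
  obtain ⟨j, rfl⟩ : ∃ j, k = j + 1 := ⟨k - 1, by omega⟩
  rw [pow_succ, pow_succ, mul_assoc, h, mul_zero]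

end Helpers
section PureLemmas
variable {F : Type*} [Field F]

lemma mq_pow_succ' (x : MilnorK F) (n : ℕ) : x ^ (n + 1) = x * x ^ n := pow_succ' x n
lemma mq_pow_one (x : MilnorK F) : x ^ 1 = x := pow_one x
lemma mq_neg_one_mul (x : MilnorK F) : (-1 : MilnorK F) * x = -x := by
  rw [mq_neg_mul, mq_one_mul]

lemma mq_neg_one_sq : (-1 : MilnorK F) * (-1 : MilnorK F) = 1 := by
  rw [mq_neg_mul, mq_one_mul, mq_neg_neg]

lemma mq_even_neg_one_pow {m : ℕ} (h : Even m) : ((-1 : MilnorK F)) ^ m = 1 := by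
  obtain ⟨k, rfl⟩ := h
  induction k with
  | zero => exact mq_pow_zero _
  | succ j ih =>
    rw [show j + 1 + (j + 1) = (j + j) + 1 + 1 from by omega, mq_pow_succ, mq_pow_succ, ih,
      mq_one_mul, mq_neg_one_sq]

lemma mq_odd_neg_one_pow {m : ℕ} (h : Odd m) : ((-1 : MilnorK F)) ^ m = -1 := by
  obtain ⟨k, rfl⟩ := h
  rw [mq_pow_succ, mq_even_neg_one_pow (even_two_mul k), mq_one_mul]

lemma P_nil : pureSymbol F ([] : List Fˣ) = 1 := rfl

lemma P_cons (a : Fˣ) (l : List Fˣ) :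
    pureSymbol F (a :: l) = MilnorSymbol F a * pureSymbol F l := rfl

lemma P_mul_S (l : List Fˣ) (a : Fˣ) :
    pureSymbol F l * MilnorSymbol F a
      = (-1 : MilnorK F) ^ l.length * (MilnorSymbol F a * pureSymbol F l) := by
  induction l with
  | nil =>
    rw [P_nil, mq_one_mul, mq_mul_one, List.length_nil, mq_pow_zero, mq_one_mul]
  | cons b t ih =>
    rw [P_cons, List.length_cons]
    exact hlp_anticomm_step (MilnorSymbol F a) (MilnorSymbol F b) (pureSymbol F t) t.length
      (MS_anticomm b a) ih

lemma s_pow (m : ℕ) :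
    (MilnorSymbol F (-1 : Fˣ)) ^ m = pureSymbol F (List.replicate m (-1 : Fˣ)) := by
  induction m with
  | zero => rw [mq_pow_zero]; rfl
  | succ k ih => rw [mq_pow_succ', ih, List.replicate_succ, P_cons]

lemma s_pow_mul_S (m : ℕ) (a : Fˣ) :
    (MilnorSymbol F (-1 : Fˣ)) ^ m * MilnorSymbol F a
      = (-1 : MilnorK F) ^ m * (MilnorSymbol F a * (MilnorSymbol F (-1 : Fˣ)) ^ m) := by
  rw [s_pow]
  have h := P_mul_S (List.replicate m (-1 : Fˣ)) a
  rwa [List.length_replicate] at h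

lemma P_mul_P (l m : List Fˣ) :
    pureSymbol F l * pureSymbol F m
      = (-1 : MilnorK F) ^ (l.length * m.length) * (pureSymbol F m * pureSymbol F l) := by
  induction l with
  | nil =>
    rw [P_nil, mq_one_mul, mq_mul_one, List.length_nil, Nat.zero_mul, mq_pow_zero, mq_one_mul]
  | cons b t ih =>
    rw [P_cons, List.length_cons]
    exact hlp_comm_step (MilnorSymbol F b) (pureSymbol F t) (pureSymbol F m) t.length m.length
      (P_mul_S m b) ih

end PureLemmas

section TsetSec
variable {F : Type*} [Field F]

def Tset (F : Type*) [Field F] (n : ℕ) : Set (MilnorK F) :=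
  {x | ∃ γ, x = (MilnorSymbol F (-1 : Fˣ)) ^ n * γ}

lemma T_zero (n : ℕ) : (0 : MilnorK F) ∈ Tset F n := ⟨0, (mq_mul_zero _).symm⟩

lemma T_add {n : ℕ} {x y : MilnorK F} (hx : x ∈ Tset F n) (hy : y ∈ Tset F n) :
    x + y ∈ Tset F n := by
  obtain ⟨γ₁, rfl⟩ := hx; obtain ⟨γ₂, rfl⟩ := hy
  exact ⟨γ₁ + γ₂, (mq_mul_add _ _ _).symm⟩

lemma T_neg {n : ℕ} {x : MilnorK F} (hx : x ∈ Tset F n) : -x ∈ Tset F n := by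
  obtain ⟨γ, rfl⟩ := hx
  exact ⟨-γ, (mq_mul_neg _ _).symm⟩

lemma T_mul_right {n : ℕ} {x : MilnorK F} (y : MilnorK F) (hx : x ∈ Tset F n) :
    x * y ∈ Tset F n := by
  obtain ⟨γ, rfl⟩ := hx
  exact ⟨γ * y, mq_mul_assoc _ _ _⟩

lemma T_mul_left (n : ℕ) : ∀ (x t : MilnorK F), t ∈ Tset F n → x * t ∈ Tset F n := by
  have key : ∀ z : TensorAlgebra ℤ (Additive Fˣ), ∀ t ∈ Tset F n,
      (RingQuot.mkRingHom (SteinbergRel F) z) * t ∈ Tset F n := by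
    intro z
    induction z using TensorAlgebra.induction with
    | algebraMap r =>
      intro t ht
      obtain ⟨γ, rfl⟩ := ht
      have h1 : (RingQuot.mkRingHom (SteinbergRel F)) (algebraMap ℤ _ r) = ((r : MilnorK F)) := by
        simp only [algebraMap_int_eq, eq_intCast, map_intCast]
      rw [h1]
      exact ⟨(r : MilnorK F) * γ, hlp_intcast r _ γ⟩
    | ι v =>
      intro t ht
      obtain ⟨γ, rfl⟩ := ht
      exact hlp_symbol_T (MilnorSymbol F (Additive.toMul v)) (MilnorSymbol F (-1 : Fˣ)) γ n
        (s_pow_mul_S n (Additive.toMul v))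
    | mul x y hx hy =>
      intro t ht
      rw [map_mul, mq_mul_assoc]
      exact hx _ (hy _ ht)
    | add x y hx hy =>
      intro t ht
      rw [map_add, mq_add_mul]
      exact T_add (hx _ ht) (hy _ ht)
  intro x t ht
  obtain ⟨z, rfl⟩ := RingQuot.mkRingHom_surjective (SteinbergRel F) x
  exact key z t ht

lemma P_sq_mem (l : List Fˣ) :
    pureSymbol F l * pureSymbol F l ∈ Tset F l.length := by
  induction l with
  | nil => exact ⟨1, by rw [P_nil, mq_mul_one, List.length_nil, mq_pow_zero, mq_one_mul]⟩
  | cons a t ih =>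
    obtain ⟨γ, hγ⟩ := ih
    refine ⟨MilnorSymbol F a * γ, ?_⟩
    rw [P_cons, List.length_cons]
    exact hlp_sq_step (MilnorSymbol F a) (pureSymbol F t) (MilnorSymbol F (-1 : Fˣ)) γ t.length
      (P_mul_S t a) (s_pow_mul_S t.length a) (MS_sq a) hγ

def milnorIdeal (F : Type*) [Field F] (n : ℕ) : TwoSidedIdeal (MilnorK F) :=
  TwoSidedIdeal.mk' (Tset F n) (T_zero n) T_add T_neg
    (fun {x y} hy => T_mul_left n x y hy) (fun {x y} hx => T_mul_right y hx)

end TsetSec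


/-- if `α = α₁ + ⋯ + α_k` is a sum of `k` pure symbols of degree `n > 0`,
then `α^(k+1) = {-1}ⁿ γ` for some `γ`. -/
theorem milnor_sum_power (F : Type*) [Field F] (n : ℕ) (hn : 0 < n)
    (L : List (List Fˣ)) (hL : ∀ l ∈ L, l.length = n)
    (α : MilnorK F) (hα : α = (L.map (pureSymbol F)).sum) :
    ∃ γ : MilnorK F, α ^ (L.length + 1) = MilnorSymbol F (-1) ^ n * γ := by
  rcases L with _ | ⟨l₀, L'⟩
  · refine ⟨0, ?_⟩
    simp only [List.map_nil, List.sum_nil] at hα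
    rw [hα]
    show (0 : MilnorK F) ^ 1 = MilnorSymbol F (-1) ^ n * 0
    rw [mq_pow_one]
    exact (mq_mul_zero _).symm
  set L := l₀ :: L' with hLdef
  set I := milnorIdeal F n with hI
  set c := I.ringCon with hc
  set π : MilnorK F →+* c.Quotient := c.mk' with hπ
  have hπ0 : ∀ t ∈ Tset F n, π t = 0 := by
    intro t ht
    have h2 : c t 0 := by
      have h1 : t ∈ I := by rw [hI, milnorIdeal, TwoSidedIdeal.mem_mk']; exact ht
      exact (TwoSidedIdeal.mem_iff I t).mp h1
    rw [show (0 : c.Quotient) = π 0 from (map_zero π).symm]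
    exact (RingCon.eq c).mpr h2
  have hπ0' : ∀ t : MilnorK F, π t = 0 → t ∈ Tset F n := by
    intro t ht
    rw [show (0 : c.Quotient) = π 0 from (map_zero π).symm] at ht
    have h2 : c t 0 := (RingCon.eq c).mp ht
    have h1 : t ∈ I := (TwoSidedIdeal.mem_iff I t).mpr h2
    rw [hI, milnorIdeal, TwoSidedIdeal.mem_mk'] at h1
    exact h1
  set xs : List c.Quotient := L.map (fun l => π (pureSymbol F l)) with hxs
  have hπα : π α = xs.sum := by
    rw [hα, map_list_sum, hxs, List.map_map]
    rfl
  have hsq : ∀ x ∈ xs, x * x = 0 := by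
    intro x hx
    obtain ⟨l, hl, rfl⟩ := List.mem_map.mp hx
    rw [← map_mul]
    apply hπ0
    rw [← hL l hl]
    exact P_sq_mem l
  have hlen : xs.length = L.length := by rw [hxs, List.length_map]
  suffices h : π (α ^ (L.length + 1)) = 0 by
    exact hπ0' _ h
  rw [map_pow, hπα]
  rcases Nat.even_or_odd n with he | ho
  · -- even degree: images commute
    have hcomm : ∀ x ∈ xs, ∀ y ∈ xs, Commute x y := by
      intro x hx y hy
      obtain ⟨l, hl, rfl⟩ := List.mem_map.mp hx
      obtain ⟨m, hm, rfl⟩ := List.mem_map.mp hy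
      have hpp : pureSymbol F l * pureSymbol F m = pureSymbol F m * pureSymbol F l := by
        have h := P_mul_P l m
        rw [hL l hl, hL m hm, mq_even_neg_one_pow (he.mul_left n), mq_one_mul] at h
        exact h
      show π (pureSymbol F l) * π (pureSymbol F m) = π (pureSymbol F m) * π (pureSymbol F l)
      rw [← map_mul, ← map_mul, hpp]
    rw [← hlen]
    exact hlp_comm_sum_pow xs hsq hcomm
  · -- odd degree: images anticommute, square of sum is zero
    have hac : ∀ x ∈ xs, ∀ y ∈ xs, x * y = -(y * x) := by
      intro x hx y hy
      obtain ⟨l, hl, rfl⟩ := List.mem_map.mp hx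
      obtain ⟨m, hm, rfl⟩ := List.mem_map.mp hy
      have hpp : pureSymbol F l * pureSymbol F m = -(pureSymbol F m * pureSymbol F l) := by
        have h := P_mul_P l m
        rw [hL l hl, hL m hm, mq_odd_neg_one_pow (ho.mul ho), mq_neg_one_mul] at h
        exact h
      rw [← map_mul, ← map_mul, hpp, map_neg]
    have h2 : xs.sum * xs.sum = 0 := hlp_anticomm_sum_sq xs hsq hac
    exact hlp_pow_of_sq_zero xs.sum L.length (by rw [hLdef]; simp) h2
end

section
/- Let $R$ be a commutative ring that is the fiber product of $\mathbb{Z}$ and a commutative ring $W$ over $\mathbb{Z}/2$ (with the surjection $\mathbb{Z} \twoheadrightarrow \mathbb{Z}/2$ and a ring map $W \to \mathbb{Z}/2$). If in $W$ all torsion is 2-primary and nilpotents are exactly the torsion elements in the kernel of $W \to \mathbb{Z}/2$, then in $R$ all torsion is 2-primary and nilpotents are exactly the torsion elements. -/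
/-- let `R = ℤ ×_{ℤ/2} W` be the fiber product of `ℤ` (via reduction mod 2)
and a commutative ring `W` (via a ring map `f : W → ℤ/2`), realized as the subring of
`ℤ × W` of pairs with matching images in `ℤ/2`. If in `W` all torsion is 2-primary and
the nilpotents are exactly the torsion elements of `ker f`, then in `R` all torsion is
2-primary and the nilpotents are exactly the torsion elements. -/
theorem fiber_product_torsion_nilpotent
    (W : Type*) [CommRing W] (f : W →+* ZMod 2)
    (h1 : ∀ w : W, IsOfFinAddOrder w → ∃ k : ℕ, (2 ^ k : ℕ) • w = 0)
    (h2 : ∀ w : W, IsNilpotent w ↔ (IsOfFinAddOrder w ∧ f w = 0)) :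
    let R : Subring (ℤ × W) :=
      RingHom.eqLocus ((Int.castRingHom (ZMod 2)).comp (RingHom.fst ℤ W))
        (f.comp (RingHom.snd ℤ W))
    (∀ x : R, IsOfFinAddOrder x → ∃ k : ℕ, (2 ^ k : ℕ) • x = 0) ∧
    (∀ x : R, IsNilpotent x ↔ IsOfFinAddOrder x) := by
  intro R
  -- characterize finite additive order in R
  have key : ∀ x : R, IsOfFinAddOrder x →
      (x : ℤ × W).1 = 0 ∧ IsOfFinAddOrder (x : ℤ × W).2 := by
    intro x hx
    obtain ⟨n, hn, hnx⟩ := (isOfFinAddOrder_iff_nsmul_eq_zero).1 hx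
    have hval : n • (x : ℤ × W) = 0 := by
      have := congrArg (Subtype.val) hnx
      simpa using this
    have h1' : n • (x : ℤ × W).1 = 0 := congrArg Prod.fst hval
    have h2' : n • (x : ℤ × W).2 = 0 := congrArg Prod.snd hval
    constructor
    · have : (n : ℤ) * (x : ℤ × W).1 = 0 := by simpa [nsmul_eq_mul] using h1'
      rcases mul_eq_zero.1 this with h | h
      · exact absurd (by exact_mod_cast h) hn.ne'
      · exact h
    · exact (isOfFinAddOrder_iff_nsmul_eq_zero).2 ⟨n, hn, h2'⟩
  constructor
  · intro x hx
    obtain ⟨hx1, hx2⟩ := key x hx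
    obtain ⟨k, hk⟩ := h1 _ hx2
    refine ⟨k, ?_⟩
    apply Subtype.ext
    rw [AddSubmonoidClass.coe_nsmul, Subring.coe_zero]
    ext
    · simp [hx1]
    · simpa using hk
  · intro x
    constructor
    · intro ⟨m, hm⟩
      have hval : (x : ℤ × W) ^ m = 0 := by
        have := congrArg (Subtype.val) hm
        simpa using this
      have hw : (x : ℤ × W).2 ^ m = 0 := by
        have := congrArg Prod.snd hval
        simpa using this
      obtain ⟨ho, -⟩ := (h2 _).1 ⟨m, hw⟩
      have h1' : (x : ℤ × W).1 ^ m = 0 := by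
        have := congrArg Prod.fst hval
        simpa using this
      have hn1 : (x : ℤ × W).1 = 0 := by
        rcases Nat.eq_zero_or_pos m with rfl | hmpos
        · simp at h1'
        · exact pow_eq_zero_iff hmpos.ne' |>.1 h1'
      obtain ⟨n, hn, hnw⟩ := (isOfFinAddOrder_iff_nsmul_eq_zero).1 ho
      refine (isOfFinAddOrder_iff_nsmul_eq_zero).2 ⟨n, hn, ?_⟩
      apply Subtype.ext
      rw [AddSubmonoidClass.coe_nsmul, Subring.coe_zero]
      ext
      · simp [hn1]
      · simpa using hnw
    · intro hx
      obtain ⟨hx1, hx2⟩ := key x hx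
      have hmem : ((Int.castRingHom (ZMod 2)).comp (RingHom.fst ℤ W)) (x : ℤ × W)
          = (f.comp (RingHom.snd ℤ W)) (x : ℤ × W) := x.2
      have hf : f (x : ℤ × W).2 = 0 := by
        have hmem' : ((x : ℤ × W).1 : ZMod 2) = f (x : ℤ × W).2 := hmem
        rw [← hmem', hx1]
        simp
      obtain ⟨m, hmw⟩ := (h2 _).2 ⟨hx2, hf⟩
      refine ⟨m + 1, ?_⟩
      apply Subtype.ext
      have : (x ^ (m + 1) : R).val = (x : ℤ × W) ^ (m + 1) := by simp
      rw [this]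
      ext
      · simp [hx1]
      · simp [pow_succ, hmw]
end
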